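/- arXiv:2003.00787 — 2 statements merged into one kernel-verified Lean document; each statement's English description precedes it below -/
import Mathlib

section
/- For all positive integers $d_1, d_2$, the identity $\frac{2 d_1 d_2}{(d_1+d_2)^2}\binom{d_1+d_2}{d_1}^2 = \sum \frac{(a e - b c)^2}{(a+b)^2(c+e)^2}\binom{a+b}{a}^2\binom{c+e}{c}^2$ holds, where the sum runs over all pairs of nonnegative integer vectors $(a,b), (c,e) \in \mathbb{N}^2 \setminus \{(0,0)\}$ with $(a,b)+(c,e)=(d_1,d_2)$. -/
open Finset
set_option maxHeartbeats 1000000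

noncomputable def fz : ℤ → ℤ → ℚ := fun a b =>
  if 0 ≤ a ∧ 0 ≤ b then (((a + b).toNat.choose a.toNat : ℚ)) ^ 2 else 0

lemma fz_neg_left {a b : ℤ} (h : a < 0) : fz a b = 0 := by
  simp [fz, not_and_or, not_le.mpr h]

lemma fz_neg_right {a b : ℤ} (h : b < 0) : fz a b = 0 := by
  simp [fz, not_and_or, not_le.mpr h]

lemma fz_coe (a b : ℕ) : fz a b = (((a + b).choose a : ℚ)) ^ 2 := by
  have h : ((a : ℤ) + b).toNat = a + b := by omega
  simp [fz, h]

lemma step_left' (n k : ℕ) :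
    ((n : ℚ) + 1) * (n.choose k : ℚ) = ((k : ℚ) + 1) * ((n+1).choose (k+1) : ℚ) := by
  have := Nat.add_one_mul_choose_eq n k
  have := congrArg (fun x : ℕ => (x : ℚ)) this
  push_cast at this
  linarith

lemma step_right' (n k : ℕ) (hk : k ≤ n + 1) :
    ((n : ℚ) + 1) * (n.choose k : ℚ) = ((n : ℚ) + 1 - k) * ((n+1).choose k : ℚ) := by
  have h1 : (n+1) * n.choose k = (n+1).choose (k+1) * (k+1) := Nat.add_one_mul_choose_eq n k
  have h2 : (n+1).choose (k+1) * (k+1) = (n+1).choose k * ((n+1) - k) :=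
    Nat.choose_succ_right_eq (n+1) k
  have h3 : (n+1) * n.choose k = (n+1).choose k * ((n+1) - k) := h1.trans h2
  have := congrArg (fun x : ℕ => (x : ℚ)) h3
  push_cast [Nat.cast_sub hk] at this
  linarith

lemma key_alg (A B : ℕ) :
    ((A:ℚ)+2) * (((A+B+4).choose (A+2) : ℚ))^2
  - 2*((A:ℚ)+1) * (((A+B+3).choose (A+1) : ℚ))^2
  - 2*((A:ℚ)+2) * (((A+B+3).choose (A+2) : ℚ))^2
  + (A:ℚ) * (((A+B+2).choose A : ℚ))^2
  - 2*((A:ℚ)+1) * (((A+B+2).choose (A+1) : ℚ))^2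
  + ((A:ℚ)+2) * (((A+B+2).choose (A+2) : ℚ))^2
  - (((A+B+3).choose (A+1) : ℚ))^2
  + (((A+B+2).choose A : ℚ))^2
  - (((A+B+2).choose (A+1) : ℚ))^2 = 0 := by
  have hn : ((A:ℚ)+(B:ℚ)+4) ≠ 0 := by positivity
  have hm : ((A:ℚ)+(B:ℚ)+3) ≠ 0 := by positivity
  set x0 : ℚ := ((A+B+4).choose (A+2) : ℚ) with hx0
  set x1 : ℚ := ((A+B+3).choose (A+1) : ℚ) with hx1
  set x2 : ℚ := ((A+B+3).choose (A+2) : ℚ) with hx2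
  set y0 : ℚ := ((A+B+2).choose A : ℚ) with hy0
  set y1 : ℚ := ((A+B+2).choose (A+1) : ℚ) with hy1
  set y2 : ℚ := ((A+B+2).choose (A+2) : ℚ) with hy2
  have h1 := step_left' (A+B+3) (A+1)
  have h2 := step_right' (A+B+3) (A+2) (by omega)
  have h3 := step_left' (A+B+2) A
  have h4 := step_right' (A+B+2) (A+1) (by omega)
  have h5 := step_right' (A+B+2) (A+2) (by omega)
  have e34 : A+B+3+1 = A+B+4 := by omega
  have e23 : A+B+2+1 = A+B+3 := by omega
  rw [e34] at h1 h2
  rw [e23] at h3 h4 h5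
  push_cast at h1 h2 h3 h4 h5
  simp only [← hx0, ← hx1, ← hx2, ← hy0, ← hy1, ← hy2] at h1 h2 h3 h4 h5
  have ex1 : x1 = ((A:ℚ)+2) * x0 / ((A:ℚ)+(B:ℚ)+4) := by
    field_simp
    linarith
  have ex2 : x2 = ((B:ℚ)+2) * x0 / ((A:ℚ)+(B:ℚ)+4) := by
    field_simp
    linarith
  have ey0 : y0 = ((A:ℚ)+1) * x1 / ((A:ℚ)+(B:ℚ)+3) := by
    field_simp
    linarith
  have ey1 : y1 = ((B:ℚ)+2) * x1 / ((A:ℚ)+(B:ℚ)+3) := by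
    field_simp
    linarith
  have ey2 : y2 = ((B:ℚ)+1) * x2 / ((A:ℚ)+(B:ℚ)+3) := by
    field_simp
    linarith
  rw [ey0, ey1, ey2, ex1, ex2]
  field_simp
  ring

lemma fz_zero_right (k : ℕ) : fz (k : ℤ) 0 = 1 := by
  have := fz_coe k 0
  norm_num at this ⊢
  simpa using this

lemma fz_zero_left (k : ℕ) : fz 0 (k : ℤ) = 1 := by
  have := fz_coe 0 k
  norm_num [Nat.choose_zero_right] at this ⊢
  simpa using this

lemma fz_one_right (k : ℕ) : fz (k : ℤ) 1 = ((k : ℚ) + 1) ^ 2 := by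
  have := fz_coe k 1
  rw [Nat.choose_symm_add, Nat.choose_one_right] at this
  norm_num at this ⊢
  simpa using this

lemma fz_one_left (k : ℕ) : fz 1 (k : ℤ) = ((k : ℚ) + 1) ^ 2 := by
  have := fz_coe 1 k
  rw [Nat.choose_one_right] at this
  norm_num at this ⊢
  rw [this]; ring

lemma w_eq_zero (a b : ℤ) :
    a * fz a b - 2*(a-1) * fz (a-1) b - 2*a * fz a (b-1) + (a-2) * fz (a-2) b
      - 2*(a-1) * fz (a-1) (b-1) + a * fz a (b-2)
      - fz (a-1) b + fz (a-2) b - fz (a-1) (b-1) = 0 := by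
  rcases lt_or_ge b 0 with hb | hb
  · simp only [fz_neg_right (show b < 0 by omega), fz_neg_right (show b-1 < 0 by omega),
      fz_neg_right (show b-2 < 0 by omega)]
    ring
  rcases lt_or_ge a 1 with ha | ha
  · rcases lt_or_ge a 0 with ha0 | ha0
    · simp only [fz_neg_left (show a < 0 by omega), fz_neg_left (show a-1 < 0 by omega),
        fz_neg_left (show a-2 < 0 by omega)]
      ring
    · have haz : a = 0 := by omega
      subst haz
      simp only [fz_neg_left (show (0:ℤ)-1 < 0 by omega),
        fz_neg_left (show (0:ℤ)-2 < 0 by omega)]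
      push_cast
      ring
  -- now a ≥ 1, b ≥ 0
  obtain ⟨A, rfl⟩ : ∃ A : ℕ, a = (A : ℤ) + 1 := ⟨(a-1).toNat, by omega⟩
  obtain ⟨B, rfl⟩ : ∃ B : ℕ, b = (B : ℤ) := ⟨b.toNat, by omega⟩
  rcases A with _ | A
  · -- a = 1
    norm_num
    rcases B with _ | B
    · norm_num [fz]
    rcases B with _ | B
    · norm_num [fz]
      norm_num [show Int.toNat 2 = 2 from rfl]
    · have eB : B+1+1 = B+2 := by omega
      rw [eB]
      have r2 : ((B+2:ℕ):ℤ) - 1 = ((B+1:ℕ):ℤ) := by push_cast; ring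
      have r3 : ((B+2:ℕ):ℤ) - 2 = ((B:ℕ):ℤ) := by push_cast; ring
      rw [r2, r3]
      simp only [fz_neg_left (show (-1:ℤ) < 0 by norm_num), fz_one_left, fz_zero_left]
      push_cast
      ring
  · -- a = A + 2
    have q2 : ((A+1:ℕ):ℤ) + 1 - 1 = ((A+1:ℕ):ℤ) := by push_cast; ring
    have q3 : ((A+1:ℕ):ℤ) + 1 - 2 = ((A:ℕ):ℤ) := by push_cast; ring
    have q1 : ((A+1:ℕ):ℤ) + 1 = ((A+2:ℕ):ℤ) := by push_cast; ring
    rw [q2, q3, q1]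
    rcases B with _ | B
    · simp only [Nat.cast_zero, fz_neg_right (show (0:ℤ) - 1 < 0 by norm_num),
        fz_neg_right (show (0:ℤ) - 2 < 0 by norm_num), fz_zero_right]
      push_cast
      ring
    rcases B with _ | B
    · simp only [show (0:ℕ)+1 = 1 from rfl, Nat.cast_one]
      rw [show (1:ℤ)-1 = 0 by norm_num]
      simp only [fz_neg_right (show (1:ℤ)-2 < 0 by norm_num), fz_one_right, fz_zero_right]
      push_cast
      ring
    · -- main case a = A+2, b = B+2
      have eB : B+1+1 = B+2 := by omega
      rw [eB]
      have r2 : ((B+2:ℕ):ℤ) - 1 = ((B+1:ℕ):ℤ) := by push_cast; ring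
      have r3 : ((B+2:ℕ):ℤ) - 2 = ((B:ℕ):ℤ) := by push_cast; ring
      rw [r2, r3]
      simp only [fz_coe]
      have e1 : (A+2)+(B+2) = A+B+4 := by omega
      have e2 : (A+1)+(B+2) = A+B+3 := by omega
      have e3 : (A+2)+(B+1) = A+B+3 := by omega
      have e4 : A+(B+2) = A+B+2 := by omega
      have e5 : (A+1)+(B+1) = A+B+2 := by omega
      have e6 : (A+2)+B = A+B+2 := by omega
      rw [e1, e2, e3, e4, e5, e6]
      have hk := key_alg A B
      push_cast
      push_cast at hk
      linarith [hk]

noncomputable def grid (m n : ℤ) : Finset (ℤ × ℤ) := (Finset.Icc 0 m) ×ˢ (Finset.Icc 0 n)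

lemma mem_grid {m n : ℤ} {p : ℤ × ℤ} :
    p ∈ grid m n ↔ (0 ≤ p.1 ∧ p.1 ≤ m) ∧ (0 ≤ p.2 ∧ p.2 ≤ n) := by
  simp [grid, Finset.mem_Icc]

lemma grid_subset {u v m n : ℤ} (hu : u ≤ m) (hv : v ≤ n) : grid u v ⊆ grid m n := by
  intro p hp
  rw [mem_grid] at hp ⊢
  omega

noncomputable def Tz (m n : ℤ) : ℚ := ∑ p ∈ grid m n, fz p.1 p.2 * fz (m - p.1) (n - p.2)

lemma Tz_neg_left {m n : ℤ} (h : m < 0) : Tz m n = 0 := by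
  apply Finset.sum_eq_zero
  intro p hp
  rw [mem_grid] at hp
  exact absurd (hp.1.1.trans hp.1.2) (not_le.mpr h)

lemma Tz_neg_right {m n : ℤ} (h : n < 0) : Tz m n = 0 := by
  apply Finset.sum_eq_zero
  intro p hp
  rw [mem_grid] at hp
  exact absurd (hp.2.1.trans hp.2.2) (not_le.mpr h)

lemma fz_symm (a b : ℤ) : fz a b = fz b a := by
  rcases lt_or_ge a 0 with h | h
  · rw [fz_neg_left h, fz_neg_right h]
  rcases lt_or_ge b 0 with h' | h'
  · rw [fz_neg_right h', fz_neg_left h']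
  obtain ⟨A, rfl⟩ : ∃ A : ℕ, a = (A : ℤ) := ⟨a.toNat, by omega⟩
  obtain ⟨B, rfl⟩ : ∃ B : ℕ, b = (B : ℤ) := ⟨b.toNat, by omega⟩
  rw [fz_coe, fz_coe, Nat.choose_symm_add, Nat.add_comm]

lemma T_ext (m n u v : ℤ) (hu : u ≤ m) (hv : v ≤ n) :
    Tz u v = ∑ p ∈ grid m n, fz p.1 p.2 * fz (u - p.1) (v - p.2) := by
  rw [Tz]
  apply Finset.sum_subset (grid_subset hu hv)
  intro p hp hnp
  rw [mem_grid] at hp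
  rw [mem_grid] at hnp
  push_neg at hnp
  rcases lt_or_ge u p.1 with h | h
  · rw [fz_neg_left (by omega : u - p.1 < 0), mul_zero]
  · rw [fz_neg_right (by omega : v - p.2 < 0), mul_zero]

lemma shift_sum (m n i j : ℤ) (hi : 0 ≤ i) (hj : 0 ≤ j) (c : ℤ → ℚ) :
    ∑ p ∈ grid m n, c p.1 * fz (p.1 - i) (p.2 - j) * fz (m - p.1) (n - p.2)
      = ∑ p ∈ grid m n, c (p.1 + i) * fz p.1 p.2 * fz ((m - i) - p.1) ((n - j) - p.2) := by
  have step1 : ∑ p ∈ grid m n, c p.1 * fz (p.1 - i) (p.2 - j) * fz (m - p.1) (n - p.2)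
      = ∑ p ∈ (Finset.Icc i m) ×ˢ (Finset.Icc j n),
          c p.1 * fz (p.1 - i) (p.2 - j) * fz (m - p.1) (n - p.2) := by
    apply (Finset.sum_subset ?_ ?_).symm
    · intro p hp
      simp only [Finset.mem_product, Finset.mem_Icc] at hp
      rw [mem_grid]
      omega
    · intro p hp hnp
      rw [mem_grid] at hp
      simp only [Finset.mem_product, Finset.mem_Icc, not_and_or, not_and, not_le] at hnp
      rcases lt_or_ge p.1 i with h | h
      · rw [fz_neg_left (by omega : p.1 - i < 0), mul_zero, zero_mul]
      · rw [fz_neg_right (by omega : p.2 - j < 0), mul_zero, zero_mul]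
  have step2 : ∑ p ∈ (Finset.Icc i m) ×ˢ (Finset.Icc j n),
          c p.1 * fz (p.1 - i) (p.2 - j) * fz (m - p.1) (n - p.2)
      = ∑ p ∈ (Finset.Icc (0:ℤ) (m - i)) ×ˢ (Finset.Icc (0:ℤ) (n - j)),
          c (p.1 + i) * fz p.1 p.2 * fz ((m - i) - p.1) ((n - j) - p.2) := by
    apply Finset.sum_nbij' (fun p => (p.1 - i, p.2 - j)) (fun p => (p.1 + i, p.2 + j))
    · intro p hp
      simp only [Finset.mem_product, Finset.mem_Icc] at hp ⊢
      omega
    · intro p hp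
      simp only [Finset.mem_product, Finset.mem_Icc] at hp ⊢
      omega
    · intro p _
      simp
    · intro p _
      simp
    · intro p _
      simp only
      congr 1
      · congr 1
        · ring_nf
      · congr 1 <;> ring
  rw [step1, step2]
  apply (Finset.sum_subset ?_ ?_)
  · intro p hp
    simp only [Finset.mem_product, Finset.mem_Icc] at hp
    rw [mem_grid]
    omega
  · intro p hp hnp
    rw [mem_grid] at hp
    simp only [Finset.mem_product, Finset.mem_Icc, not_and_or, not_and, not_le] at hnp
    rcases lt_or_ge (m - i) p.1 with h | h
    · rw [fz_neg_left (by omega : (m - i) - p.1 < 0), mul_zero]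
    · rw [fz_neg_right (by omega : (n - j) - p.2 < 0), mul_zero]

lemma sym_sum (m n u v : ℤ) (hu : u ≤ m) (hv : v ≤ n) (c : ℤ → ℚ) :
    ∑ p ∈ grid m n, c p.1 * fz p.1 p.2 * fz (u - p.1) (v - p.2)
      = ∑ p ∈ grid m n, c (u - p.1) * fz p.1 p.2 * fz (u - p.1) (v - p.2) := by
  have restrict : ∀ g : ℤ → ℤ → ℚ,
      ∑ p ∈ grid m n, g p.1 p.2 * (fz p.1 p.2 * fz (u - p.1) (v - p.2))
        = ∑ p ∈ grid u v, g p.1 p.2 * (fz p.1 p.2 * fz (u - p.1) (v - p.2)) := by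
    intro g
    apply (Finset.sum_subset (grid_subset hu hv) ?_).symm
    intro p hp hnp
    rw [mem_grid] at hp
    rw [mem_grid] at hnp
    push_neg at hnp
    rcases lt_or_ge u p.1 with h | h
    · rw [fz_neg_left (by omega : u - p.1 < 0), mul_zero, mul_zero]
    · rw [fz_neg_right (by omega : v - p.2 < 0), mul_zero, mul_zero]
  have l1 := restrict (fun x _ => c x)
  have l2 := restrict (fun x _ => c (u - x))
  have mid : ∑ p ∈ grid u v, c p.1 * (fz p.1 p.2 * fz (u - p.1) (v - p.2))
      = ∑ p ∈ grid u v, c (u - p.1) * (fz p.1 p.2 * fz (u - p.1) (v - p.2)) := by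
    apply Finset.sum_nbij' (fun p => (u - p.1, v - p.2)) (fun p => (u - p.1, v - p.2))
    · intro p hp
      rw [mem_grid] at hp ⊢
      omega
    · intro p hp
      rw [mem_grid] at hp ⊢
      omega
    · intro p _
      simp
    · intro p _
      simp
    · intro p _
      simp only [sub_sub_cancel]
      ring
  calc ∑ p ∈ grid m n, c p.1 * fz p.1 p.2 * fz (u - p.1) (v - p.2)
      = ∑ p ∈ grid m n, c p.1 * (fz p.1 p.2 * fz (u - p.1) (v - p.2)) :=
        Finset.sum_congr rfl (fun p _ => by ring)
    _ = ∑ p ∈ grid u v, c p.1 * (fz p.1 p.2 * fz (u - p.1) (v - p.2)) := l1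
    _ = ∑ p ∈ grid u v, c (u - p.1) * (fz p.1 p.2 * fz (u - p.1) (v - p.2)) := mid
    _ = ∑ p ∈ grid m n, c (u - p.1) * (fz p.1 p.2 * fz (u - p.1) (v - p.2)) := l2.symm
    _ = ∑ p ∈ grid m n, c (u - p.1) * fz p.1 p.2 * fz (u - p.1) (v - p.2) :=
        Finset.sum_congr rfl (fun p _ => by ring)

lemma weight_sum (m n u v : ℤ) (hu : u ≤ m) (hv : v ≤ n) :
    ∑ p ∈ grid m n, (p.1 : ℚ) * fz p.1 p.2 * fz (u - p.1) (v - p.2)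
      = (u : ℚ) / 2 * Tz u v := by
  have h := sym_sum m n u v hu hv (fun t => (t : ℚ))
  simp only [Int.cast_sub] at h
  have hT := T_ext m n u v hu hv
  have comb : (2 : ℚ) * ∑ p ∈ grid m n, (p.1 : ℚ) * fz p.1 p.2 * fz (u - p.1) (v - p.2)
      = (u : ℚ) * Tz u v := by
    rw [hT, Finset.mul_sum, Finset.mul_sum]
    calc ∑ p ∈ grid m n, 2 * ((p.1 : ℚ) * fz p.1 p.2 * fz (u - p.1) (v - p.2))
        = (∑ p ∈ grid m n, (p.1 : ℚ) * fz p.1 p.2 * fz (u - p.1) (v - p.2))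
          + ∑ p ∈ grid m n, (p.1 : ℚ) * fz p.1 p.2 * fz (u - p.1) (v - p.2) := by
          rw [← Finset.sum_add_distrib]
          exact Finset.sum_congr rfl (fun p _ => by ring)
      _ = (∑ p ∈ grid m n, (p.1 : ℚ) * fz p.1 p.2 * fz (u - p.1) (v - p.2))
          + ∑ p ∈ grid m n, ((u : ℚ) - p.1) * fz p.1 p.2 * fz (u - p.1) (v - p.2) := by
          rw [h]
      _ = ∑ p ∈ grid m n, (u : ℚ) * (fz p.1 p.2 * fz (u - p.1) (v - p.2)) := by
          rw [← Finset.sum_add_distrib]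
          exact Finset.sum_congr rfl (fun p _ => by ring)
  linarith

example : True := trivial

lemma Bsum (m n i j : ℤ) (hi : 0 ≤ i) (hj : 0 ≤ j) (α β : ℚ) :
    ∑ p ∈ grid m n, (α * (p.1 : ℚ) + β) * fz (p.1 - i) (p.2 - j) * fz (m - p.1) (n - p.2)
      = (α * ((m : ℚ) - (i : ℚ)) / 2 + α * (i : ℚ) + β) * Tz (m - i) (n - j) := by
  have h := shift_sum m n i j hi hj (fun t => α * (t : ℚ) + β)
  rw [h]
  have hw := weight_sum m n (m - i) (n - j) (by omega) (by omega)
  have hT := T_ext m n (m - i) (n - j) (by omega) (by omega)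
  calc ∑ p ∈ grid m n, (α * ((p.1 + i : ℤ) : ℚ) + β) * fz p.1 p.2 * fz ((m-i) - p.1) ((n-j) - p.2)
      = (∑ p ∈ grid m n, α * ((p.1 : ℚ) * fz p.1 p.2 * fz ((m-i) - p.1) ((n-j) - p.2)))
        + ∑ p ∈ grid m n, (α * (i:ℚ) + β) * (fz p.1 p.2 * fz ((m-i) - p.1) ((n-j) - p.2)) := by
        rw [← Finset.sum_add_distrib]
        apply Finset.sum_congr rfl
        intro p _
        push_cast
        ring
    _ = α * ((((m - i : ℤ)) : ℚ) / 2 * Tz (m-i) (n-j)) + (α * (i:ℚ) + β) * Tz (m-i) (n-j) := by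
        rw [← Finset.mul_sum, ← Finset.mul_sum, hw, ← hT]
    _ = (α * ((m : ℚ) - (i : ℚ)) / 2 + α * (i : ℚ) + β) * Tz (m - i) (n - j) := by
        push_cast
        ring

lemma master_mul (m n : ℤ) :
    (m : ℚ) * (Tz m n - 2 * Tz (m-1) n - 2 * Tz m (n-1) + Tz (m-2) n
      - 2 * Tz (m-1) (n-1) + Tz m (n-2)) = 0 := by
  have hzero : ∑ p ∈ grid m n,
      (((p.1 : ℚ)) * fz p.1 p.2 - 2*((p.1 : ℚ)-1) * fz (p.1-1) p.2
        - 2*(p.1 : ℚ) * fz p.1 (p.2-1) + ((p.1 : ℚ)-2) * fz (p.1-2) p.2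
        - 2*((p.1 : ℚ)-1) * fz (p.1-1) (p.2-1) + (p.1 : ℚ) * fz p.1 (p.2-2)
        - fz (p.1-1) p.2 + fz (p.1-2) p.2 - fz (p.1-1) (p.2-1))
      * fz (m - p.1) (n - p.2) = 0 := by
    apply Finset.sum_eq_zero
    intro p _
    have hw := w_eq_zero p.1 p.2
    rw [hw, zero_mul]
  have split :
      (∑ p ∈ grid m n, ((1:ℚ) * (p.1 : ℚ) + 0) * fz (p.1 - 0) (p.2 - 0) * fz (m - p.1) (n - p.2))
      - (∑ p ∈ grid m n, ((2:ℚ) * (p.1 : ℚ) + (-2)) * fz (p.1 - 1) (p.2 - 0) * fz (m - p.1) (n - p.2))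
      - (∑ p ∈ grid m n, ((2:ℚ) * (p.1 : ℚ) + 0) * fz (p.1 - 0) (p.2 - 1) * fz (m - p.1) (n - p.2))
      + (∑ p ∈ grid m n, ((1:ℚ) * (p.1 : ℚ) + (-2)) * fz (p.1 - 2) (p.2 - 0) * fz (m - p.1) (n - p.2))
      - (∑ p ∈ grid m n, ((2:ℚ) * (p.1 : ℚ) + (-2)) * fz (p.1 - 1) (p.2 - 1) * fz (m - p.1) (n - p.2))
      + (∑ p ∈ grid m n, ((1:ℚ) * (p.1 : ℚ) + 0) * fz (p.1 - 0) (p.2 - 2) * fz (m - p.1) (n - p.2))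
      - (∑ p ∈ grid m n, ((0:ℚ) * (p.1 : ℚ) + 1) * fz (p.1 - 1) (p.2 - 0) * fz (m - p.1) (n - p.2))
      + (∑ p ∈ grid m n, ((0:ℚ) * (p.1 : ℚ) + 1) * fz (p.1 - 2) (p.2 - 0) * fz (m - p.1) (n - p.2))
      - (∑ p ∈ grid m n, ((0:ℚ) * (p.1 : ℚ) + 1) * fz (p.1 - 1) (p.2 - 1) * fz (m - p.1) (n - p.2))
      = 0 := by
    have hcomb : ∑ p ∈ grid m n,
        (((1:ℚ) * (p.1 : ℚ) + 0) * fz (p.1 - 0) (p.2 - 0) * fz (m - p.1) (n - p.2)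
        - ((2:ℚ) * (p.1 : ℚ) + (-2)) * fz (p.1 - 1) (p.2 - 0) * fz (m - p.1) (n - p.2)
        - ((2:ℚ) * (p.1 : ℚ) + 0) * fz (p.1 - 0) (p.2 - 1) * fz (m - p.1) (n - p.2)
        + ((1:ℚ) * (p.1 : ℚ) + (-2)) * fz (p.1 - 2) (p.2 - 0) * fz (m - p.1) (n - p.2)
        - ((2:ℚ) * (p.1 : ℚ) + (-2)) * fz (p.1 - 1) (p.2 - 1) * fz (m - p.1) (n - p.2)
        + ((1:ℚ) * (p.1 : ℚ) + 0) * fz (p.1 - 0) (p.2 - 2) * fz (m - p.1) (n - p.2)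
        - ((0:ℚ) * (p.1 : ℚ) + 1) * fz (p.1 - 1) (p.2 - 0) * fz (m - p.1) (n - p.2)
        + ((0:ℚ) * (p.1 : ℚ) + 1) * fz (p.1 - 2) (p.2 - 0) * fz (m - p.1) (n - p.2)
        - ((0:ℚ) * (p.1 : ℚ) + 1) * fz (p.1 - 1) (p.2 - 1) * fz (m - p.1) (n - p.2)) = 0 := by
      refine Eq.trans (Finset.sum_congr rfl fun p _ => ?_) hzero
      simp only [sub_zero]
      ring
    refine Eq.trans ?_ hcomb
    simp only [Finset.sum_sub_distrib, Finset.sum_add_distrib]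
  rw [Bsum m n 0 0 (by norm_num) (by norm_num) 1 0,
      Bsum m n 1 0 (by norm_num) (by norm_num) 2 (-2),
      Bsum m n 0 1 (by norm_num) (by norm_num) 2 0,
      Bsum m n 2 0 (by norm_num) (by norm_num) 1 (-2),
      Bsum m n 1 1 (by norm_num) (by norm_num) 2 (-2),
      Bsum m n 0 2 (by norm_num) (by norm_num) 1 0,
      Bsum m n 1 0 (by norm_num) (by norm_num) 0 1,
      Bsum m n 2 0 (by norm_num) (by norm_num) 0 1,
      Bsum m n 1 1 (by norm_num) (by norm_num) 0 1] at split
  push_cast at split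
  simp only [sub_zero] at split
  linear_combination 2 * split

lemma Tz_symm (m n : ℤ) : Tz m n = Tz n m := by
  rw [Tz, Tz]
  apply Finset.sum_nbij' (fun p => (p.2, p.1)) (fun p => (p.2, p.1))
  · intro p hp
    rw [mem_grid] at hp ⊢
    omega
  · intro p hp
    rw [mem_grid] at hp ⊢
    omega
  · intro p _
    simp
  · intro p _
    simp
  · intro p _
    simp only
    rw [fz_symm p.1 p.2, fz_symm (m - p.1) (n - p.2)]

lemma master (m n : ℤ) (h : ¬(m = 0 ∧ n = 0)) :
    Tz m n - 2 * Tz (m-1) n - 2 * Tz m (n-1) + Tz (m-2) n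
      - 2 * Tz (m-1) (n-1) + Tz m (n-2) = 0 := by
  rcases lt_or_ge m 0 with hm | hm
  · rw [Tz_neg_left hm, Tz_neg_left (show m - 1 < 0 by omega),
      Tz_neg_left (show m - 2 < 0 by omega)]
    rw [Tz_neg_left hm, Tz_neg_left (show m - 1 < 0 by omega), Tz_neg_left hm]
    ring
  rcases lt_or_ge n 0 with hn | hn
  · rw [Tz_neg_right hn, Tz_neg_right hn, Tz_neg_right (show n - 1 < 0 by omega),
      Tz_neg_right hn, Tz_neg_right (show n - 1 < 0 by omega),
      Tz_neg_right (show n - 2 < 0 by omega)]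
    ring
  rcases eq_or_ne m 0 with rfl | hm0
  · have hn0 : n ≠ 0 := by tauto
    have hs := master_mul n 0
    norm_num at hs
    rcases hs with hs | hs
    · exact absurd (Int.cast_injective hs) hn0
    · rw [Tz_symm 0 n, Tz_symm (0-1) n, Tz_symm 0 (n-1), Tz_symm (0-2) n,
        Tz_symm (0-1) (n-1), Tz_symm 0 (n-2)]
      norm_num
      linarith [hs]
  · have hs := master_mul m n
    have hmq : (m : ℚ) ≠ 0 := Int.cast_ne_zero.mpr hm0
    have h' := (mul_eq_zero.mp hs).resolve_left hmq
    linarith [h']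

noncomputable def sfun (a b : ℤ) : ℚ := (a : ℚ) / ((a : ℚ) + (b : ℚ))

noncomputable def mu (a b : ℤ) : ℚ := sfun a b * fz a b

lemma sfun_zero_zero : sfun 0 0 = 0 := by simp [sfun]

lemma mu_zero_zero : mu 0 0 = 0 := by simp [mu, sfun_zero_zero]

-- generalized shift lemma
lemma shift_sum' (m n i j u v : ℤ) (hi : 0 ≤ i) (hj : 0 ≤ j) (hu : u ≤ m) (hv : v ≤ n)
    (c : ℤ → ℚ) :
    ∑ p ∈ grid m n, c p.1 * fz (p.1 - i) (p.2 - j) * fz (u - p.1) (v - p.2)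
      = ∑ p ∈ grid m n, c (p.1 + i) * fz p.1 p.2 * fz ((u - i) - p.1) ((v - j) - p.2) := by
  have step1 : ∑ p ∈ grid m n, c p.1 * fz (p.1 - i) (p.2 - j) * fz (u - p.1) (v - p.2)
      = ∑ p ∈ (Finset.Icc i m) ×ˢ (Finset.Icc j n),
          c p.1 * fz (p.1 - i) (p.2 - j) * fz (u - p.1) (v - p.2) := by
    apply (Finset.sum_subset ?_ ?_).symm
    · intro p hp
      simp only [Finset.mem_product, Finset.mem_Icc] at hp
      rw [mem_grid]
      omega
    · intro p hp hnp
      rw [mem_grid] at hp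
      simp only [Finset.mem_product, Finset.mem_Icc, not_and_or, not_and, not_le] at hnp
      rcases lt_or_ge p.1 i with h | h
      · rw [fz_neg_left (by omega : p.1 - i < 0), mul_zero, zero_mul]
      · rw [fz_neg_right (by omega : p.2 - j < 0), mul_zero, zero_mul]
  have step2 : ∑ p ∈ (Finset.Icc i m) ×ˢ (Finset.Icc j n),
          c p.1 * fz (p.1 - i) (p.2 - j) * fz (u - p.1) (v - p.2)
      = ∑ p ∈ (Finset.Icc (0:ℤ) (m - i)) ×ˢ (Finset.Icc (0:ℤ) (n - j)),
          c (p.1 + i) * fz p.1 p.2 * fz ((u - i) - p.1) ((v - j) - p.2) := by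
    apply Finset.sum_nbij' (fun p => (p.1 - i, p.2 - j)) (fun p => (p.1 + i, p.2 + j))
    · intro p hp
      simp only [Finset.mem_product, Finset.mem_Icc] at hp ⊢
      omega
    · intro p hp
      simp only [Finset.mem_product, Finset.mem_Icc] at hp ⊢
      omega
    · intro p _
      simp
    · intro p _
      simp
    · intro p _
      simp only
      congr 1
      · congr 1
        · ring_nf
      · congr 1 <;> ring
  rw [step1, step2]
  apply (Finset.sum_subset ?_ ?_)
  · intro p hp
    simp only [Finset.mem_product, Finset.mem_Icc] at hp
    rw [mem_grid]
    omega
  · intro p hp hnp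
    rw [mem_grid] at hp
    simp only [Finset.mem_product, Finset.mem_Icc, not_and_or, not_and, not_le] at hnp
    rcases lt_or_ge (m - i) p.1 with h | h
    · rw [fz_neg_left (by omega : (u - i) - p.1 < 0), mul_zero]
    · rw [fz_neg_right (by omega : (v - j) - p.2 < 0), mul_zero]

lemma conv_eval (m n i j u v : ℤ) (hi : 0 ≤ i) (hj : 0 ≤ j) (hu : u ≤ m) (hv : v ≤ n) :
    ∑ p ∈ grid m n, fz (p.1 - i) (p.2 - j) * fz (u - p.1) (v - p.2)
      = Tz (u - i) (v - j) := by
  have h := shift_sum' m n i j u v hi hj hu hv (fun _ => 1)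
  simp only [one_mul] at h
  rw [h, ← T_ext m n (u - i) (v - j) (by omega) (by omega)]

lemma sq_lemma (a b : ℤ) (ha : 0 ≤ a) (hb : 0 ≤ b) :
    (sfun a b) ^ 2 * fz a b = fz (a - 1) b := by
  rcases eq_or_lt_of_le ha with rfl | ha1
  · simp [sfun, zero_sub, fz_neg_left (show (-1:ℤ) < 0 by norm_num)]
  · obtain ⟨A, rfl⟩ : ∃ A : ℕ, a = (A : ℤ) + 1 := ⟨(a-1).toNat, by omega⟩
    obtain ⟨B, rfl⟩ : ∃ B : ℕ, b = (B : ℤ) := ⟨b.toNat, by omega⟩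
    have e1 : ((A:ℤ) + 1) = ((A + 1 : ℕ) : ℤ) := by push_cast; ring
    have e2 : ((A:ℤ) + 1 - 1) = ((A : ℕ) : ℤ) := by push_cast; ring
    rw [e2, e1, fz_coe, fz_coe, sfun]
    have hstep := step_left' (A + B) A
    have eAB : (A + 1) + B = (A + B) + 1 := by omega
    rw [eAB]
    have hden : ((A:ℚ)) + 1 + (B:ℚ) ≠ 0 := by positivity
    have hden2 : ((A:ℚ)) + (B:ℚ) + 1 ≠ 0 := by positivity
    push_cast
    rw [div_pow, div_mul_eq_mul_div, div_eq_iff (by positivity)]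
    push_cast at hstep
    linear_combination (-((((A:ℚ)+(B:ℚ)+1) * (((A+B).choose A : ℕ):ℚ))
      + (((A:ℚ)+1) * ((((A+B)+1).choose (A+1) : ℕ):ℚ)))) * hstep

lemma sq_lemma2 (a b : ℤ) (ha : 0 ≤ a) (hb : 0 ≤ b) :
    (sfun b a) ^ 2 * fz a b = fz a (b - 1) := by
  rw [fz_symm a b, sq_lemma b a hb ha, fz_symm]

lemma mu_lemma (a b : ℤ) (ha : 0 ≤ a) (hb : 0 ≤ b) (h : ¬(a = 0 ∧ b = 0)) :
    2 * mu a b = fz a b + fz (a - 1) b - fz a (b - 1) := by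
  have hpos : (0:ℚ) < (a:ℚ) + (b:ℚ) := by
    have h' : (0:ℤ) < a + b := by omega
    exact_mod_cast h'
  have hne : ((a:ℚ) + (b:ℚ)) ≠ 0 := ne_of_gt hpos
  have hne' : ((b:ℚ) + (a:ℚ)) ≠ 0 := by rw [add_comm]; exact hne
  have hsum : sfun a b + sfun b a = 1 := by
    rw [sfun, sfun]
    field_simp
    ring
  rw [mu, ← sq_lemma a b ha hb, ← sq_lemma2 a b ha hb]
  linear_combination (fz a b * (1 - sfun a b + sfun b a)) * hsum

lemma fz00 : fz (0:ℤ) 0 = 1 := by simpa using fz_coe 0 0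

lemma pointwise_A' (a b c e : ℕ) (h0 : ¬(a = 0 ∧ b = 0)) (hD : ¬(c = 0 ∧ e = 0)) :
    ((a : ℚ) * (e : ℚ) - (b : ℚ) * (c : ℚ)) ^ 2 /
        (((a + b : ℕ) : ℚ) ^ 2 * ((c + e : ℕ) : ℚ) ^ 2) *
      ((a + b).choose a : ℚ) ^ 2 * ((c + e).choose c : ℚ) ^ 2
    = (sfun (a:ℤ) (b:ℤ) - sfun (c:ℤ) (e:ℤ))^2 * fz (a:ℤ) (b:ℤ) * fz (c:ℤ) (e:ℤ) := by
  rw [fz_coe, fz_coe, sfun, sfun]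
  have hab : ((a:ℚ) + (b:ℚ)) ≠ 0 := by
    have h' : (0:ℤ) < (a:ℤ) + b := by omega
    have h2 : (0:ℚ) < (a:ℚ) + b := by exact_mod_cast h'
    exact ne_of_gt h2
  have hce : ((c:ℚ) + (e:ℚ)) ≠ 0 := by
    have h' : (0:ℤ) < (c:ℤ) + e := by omega
    have h2 : (0:ℚ) < (c:ℚ) + e := by exact_mod_cast h'
    exact ne_of_gt h2
  push_cast
  field_simp
  ring

lemma pointwise_A (d₁ d₂ a b : ℕ) (ha : a ≤ d₁) (hb : b ≤ d₂)
    (h0 : ¬(a = 0 ∧ b = 0)) (hD : ¬(a = d₁ ∧ b = d₂)) :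
    ((a : ℚ) * ((d₂ - b : ℕ) : ℚ) - (b : ℚ) * ((d₁ - a : ℕ) : ℚ)) ^ 2 /
        (((a + b : ℕ) : ℚ) ^ 2 * (((d₁ - a) + (d₂ - b) : ℕ) : ℚ) ^ 2) *
      ((a + b).choose a : ℚ) ^ 2 * (((d₁ - a) + (d₂ - b)).choose (d₁ - a) : ℚ) ^ 2
    = (sfun (a : ℤ) (b : ℤ) - sfun ((d₁:ℤ) - a) ((d₂:ℤ) - b))^2 * fz (a : ℤ) (b : ℤ)
        * fz ((d₁:ℤ) - a) ((d₂:ℤ) - b) := by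
  have hc : (d₁:ℤ) - (a:ℤ) = ((d₁ - a : ℕ) : ℤ) := by omega
  have he : (d₂:ℤ) - (b:ℤ) = ((d₂ - b : ℕ) : ℤ) := by omega
  rw [hc, he]
  exact pointwise_A' a b (d₁ - a) (d₂ - b) h0 (by omega)

lemma step_A (d₁ d₂ : ℕ) :
    ∑ p ∈ (Finset.range (d₁ + 1) ×ˢ Finset.range (d₂ + 1)).filter
        (fun p => p ≠ (0, 0) ∧ p ≠ (d₁, d₂)),
      (((p.1 : ℚ) * ((d₂ - p.2 : ℕ) : ℚ) - (p.2 : ℚ) * ((d₁ - p.1 : ℕ) : ℚ)) ^ 2 /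
            (((p.1 + p.2 : ℕ) : ℚ) ^ 2 * (((d₁ - p.1) + (d₂ - p.2) : ℕ) : ℚ) ^ 2) *
          ((p.1 + p.2).choose p.1 : ℚ) ^ 2 *
          (((d₁ - p.1) + (d₂ - p.2)).choose (d₁ - p.1) : ℚ) ^ 2)
    = ∑ p ∈ (grid (d₁:ℤ) (d₂:ℤ)).filter
        (fun p => p ≠ ((0:ℤ), (0:ℤ)) ∧ p ≠ ((d₁:ℤ), (d₂:ℤ))),
      (sfun p.1 p.2 - sfun ((d₁:ℤ) - p.1) ((d₂:ℤ) - p.2))^2 * fz p.1 p.2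
        * fz ((d₁:ℤ) - p.1) ((d₂:ℤ) - p.2) := by
  apply Finset.sum_nbij' (fun p => ((p.1 : ℤ), (p.2 : ℤ)))
    (fun p => (p.1.toNat, p.2.toNat))
  · intro p hp
    simp only [Finset.mem_filter, Finset.mem_product, Finset.mem_range, mem_grid,
      ne_eq, Prod.mk.injEq, Prod.ext_iff] at hp ⊢
    push_cast
    omega
  · intro p hp
    simp only [Finset.mem_filter, Finset.mem_product, Finset.mem_range, mem_grid,
      ne_eq, Prod.mk.injEq, Prod.ext_iff] at hp ⊢
    omega
  · intro p hp
    simp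
  · intro p hp
    simp only [Finset.mem_filter, mem_grid, ne_eq, Prod.mk.injEq, Prod.ext_iff] at hp
    simp only [Prod.ext_iff]
    constructor <;> simp <;> omega
  · intro p hp
    simp only [Finset.mem_filter, Finset.mem_product, Finset.mem_range, ne_eq,
      Prod.mk.injEq, Prod.ext_iff] at hp
    exact pointwise_A d₁ d₂ p.1 p.2 (by omega) (by omega) (by tauto) (by tauto)

lemma main_int (d₁ d₂ : ℕ) (h₁ : 0 < d₁) (h₂ : 0 < d₂) :
    ∑ p ∈ (grid (d₁:ℤ) (d₂:ℤ)).filter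
        (fun p => p ≠ ((0:ℤ), (0:ℤ)) ∧ p ≠ ((d₁:ℤ), (d₂:ℤ))),
      (sfun p.1 p.2 - sfun ((d₁:ℤ) - p.1) ((d₂:ℤ) - p.2))^2 * fz p.1 p.2
        * fz ((d₁:ℤ) - p.1) ((d₂:ℤ) - p.2)
    = (2 * d₁ * d₂ : ℚ) / ((d₁ + d₂ : ℚ) ^ 2) * ((d₁ + d₂).choose d₁ : ℚ) ^ 2 := by
  set D1 : ℤ := (d₁ : ℤ) with hD1
  set D2 : ℤ := (d₂ : ℤ) with hD2
  have hD1p : 0 < D1 := by omega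
  have hD2p : 0 < D2 := by omega
  -- endpoint filter structure
  have h_end_filter : (grid D1 D2).filter
      (fun p => ¬(p ≠ ((0:ℤ), (0:ℤ)) ∧ p ≠ (D1, D2)))
      = {((0:ℤ), (0:ℤ)), (D1, D2)} := by
    ext p
    simp only [Finset.mem_filter, mem_grid, Finset.mem_insert, Finset.mem_singleton,
      ne_eq, Prod.ext_iff, not_and_or, not_not]
    omega
  have hnotmem : ((0:ℤ), (0:ℤ)) ∉ ({(D1, D2)} : Finset (ℤ × ℤ)) := by
    simp only [Finset.mem_singleton, Prod.ext_iff, not_and_or]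
    omega
  have split_any : ∀ f : ℤ × ℤ → ℚ, ∑ p ∈ grid D1 D2, f p
      = (∑ p ∈ (grid D1 D2).filter
          (fun p => p ≠ ((0:ℤ), (0:ℤ)) ∧ p ≠ (D1, D2)), f p)
        + f ((0:ℤ), (0:ℤ)) + f (D1, D2) := by
    intro f
    rw [← Finset.sum_filter_add_sum_filter_not (grid D1 D2)
      (fun p => p ≠ ((0:ℤ), (0:ℤ)) ∧ p ≠ (D1, D2)) f, h_end_filter,
      Finset.sum_insert hnotmem, Finset.sum_singleton]
    ring
  -- pointwise expansion of E2
  have expand : ∀ p ∈ grid D1 D2,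
      (sfun p.1 p.2 - sfun (D1 - p.1) (D2 - p.2))^2 * fz p.1 p.2
          * fz (D1 - p.1) (D2 - p.2)
        = fz (p.1 - 1) (p.2 - 0) * fz (D1 - p.1) (D2 - p.2)
          + fz (p.1 - 0) (p.2 - 0) * fz ((D1 - 1) - p.1) (D2 - p.2)
          - 2 * (mu p.1 p.2 * mu (D1 - p.1) (D2 - p.2)) := by
    intro p hp
    rw [mem_grid] at hp
    have e1 := sq_lemma p.1 p.2 hp.1.1 hp.2.1
    have e2 := sq_lemma (D1 - p.1) (D2 - p.2) (by omega) (by omega)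
    rw [show (D1 - p.1) - 1 = (D1 - 1) - p.1 by ring] at e2
    simp only [sub_zero]
    rw [mu, mu]
    linear_combination (fz (D1 - p.1) (D2 - p.2)) * e1 + (fz p.1 p.2) * e2
  -- convolution evaluations
  have hA := conv_eval D1 D2 1 0 D1 D2 (by omega) (by omega) le_rfl le_rfl
  have hB := conv_eval D1 D2 0 0 (D1 - 1) D2 (by omega) (by omega) (by omega) le_rfl
  -- sum of E2 over grid
  have hsum_expand : ∑ p ∈ grid D1 D2,
      (sfun p.1 p.2 - sfun (D1 - p.1) (D2 - p.2))^2 * fz p.1 p.2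
        * fz (D1 - p.1) (D2 - p.2)
      = Tz (D1 - 1) (D2 - 0) + Tz ((D1 - 1) - 0) (D2 - 0)
        - 2 * ∑ p ∈ grid D1 D2, mu p.1 p.2 * mu (D1 - p.1) (D2 - p.2) := by
    rw [← hA, ← hB]
    have hcomb : ∑ p ∈ grid D1 D2,
        (fz (p.1 - 1) (p.2 - 0) * fz (D1 - p.1) (D2 - p.2)
          + fz (p.1 - 0) (p.2 - 0) * fz ((D1 - 1) - p.1) (D2 - p.2)
          - 2 * (mu p.1 p.2 * mu (D1 - p.1) (D2 - p.2)))
        = (∑ p ∈ grid D1 D2, fz (p.1 - 1) (p.2 - 0) * fz (D1 - p.1) (D2 - p.2))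
          + (∑ p ∈ grid D1 D2, fz (p.1 - 0) (p.2 - 0) * fz ((D1 - 1) - p.1) (D2 - p.2))
          - 2 * ∑ p ∈ grid D1 D2, mu p.1 p.2 * mu (D1 - p.1) (D2 - p.2) := by
      rw [Finset.mul_sum, ← Finset.sum_add_distrib, ← Finset.sum_sub_distrib]
    rw [← hcomb]
    exact Finset.sum_congr rfl expand
  -- the nine-fold convolution expansion of the trinomial product
  have h1 := conv_eval D1 D2 0 0 D1 D2 (by omega) (by omega) le_rfl le_rfl
  have h2 := conv_eval D1 D2 0 0 (D1-1) D2 (by omega) (by omega) (by omega) le_rfl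
  have h3 := conv_eval D1 D2 0 0 D1 (D2-1) (by omega) (by omega) le_rfl (by omega)
  have h4 := conv_eval D1 D2 1 0 D1 D2 (by omega) (by omega) le_rfl le_rfl
  have h5 := conv_eval D1 D2 1 0 (D1-1) D2 (by omega) (by omega) (by omega) le_rfl
  have h6 := conv_eval D1 D2 1 0 D1 (D2-1) (by omega) (by omega) le_rfl (by omega)
  have h7 := conv_eval D1 D2 0 1 D1 D2 (by omega) (by omega) le_rfl le_rfl
  have h8 := conv_eval D1 D2 0 1 (D1-1) D2 (by omega) (by omega) (by omega) le_rfl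
  have h9 := conv_eval D1 D2 0 1 D1 (D2-1) (by omega) (by omega) le_rfl (by omega)
  have nine : ∑ p ∈ grid D1 D2,
      ((fz (p.1-0) (p.2-0) + fz (p.1-1) (p.2-0) - fz (p.1-0) (p.2-1)) *
       (fz (D1-p.1) (D2-p.2) + fz ((D1-1)-p.1) (D2-p.2) - fz (D1-p.1) ((D2-1)-p.2)))
      = Tz (D1-0) (D2-0) + Tz ((D1-1)-0) (D2-0) - Tz (D1-0) ((D2-1)-0)
        + Tz (D1-1) (D2-0) + Tz ((D1-1)-1) (D2-0) - Tz (D1-1) ((D2-1)-0)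
        - Tz (D1-0) (D2-1) - Tz ((D1-1)-0) (D2-1) + Tz (D1-0) ((D2-1)-1) := by
    rw [← h1, ← h2, ← h3, ← h4, ← h5, ← h6, ← h7, ← h8, ← h9]
    rw [← Finset.sum_add_distrib, ← Finset.sum_sub_distrib, ← Finset.sum_add_distrib,
      ← Finset.sum_add_distrib, ← Finset.sum_sub_distrib, ← Finset.sum_sub_distrib,
      ← Finset.sum_sub_distrib, ← Finset.sum_add_distrib]
    exact Finset.sum_congr rfl (fun p _ => by ring)
  -- the cross-term identity
  have hmaster := master D1 D2 (by simp only [not_and_or]; left; omega)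
  have hV00a : fz ((0:ℤ)-0) ((0:ℤ)-0) + fz ((0:ℤ)-1) ((0:ℤ)-0) - fz ((0:ℤ)-0) ((0:ℤ)-1)
      = 1 := by
    norm_num [fz00, fz_neg_left (show (-1:ℤ) < 0 by norm_num),
      fz_neg_right (show (-1:ℤ) < 0 by norm_num)]
  have hcross : 4 * (∑ p ∈ grid D1 D2, mu p.1 p.2 * mu (D1 - p.1) (D2 - p.2))
      = 4 * Tz (D1-1) D2
        - 2 * (fz D1 D2 + fz (D1-1) D2 - fz D1 (D2-1)) := by
    have hsplit1 := split_any (fun p => 4 * (mu p.1 p.2 * mu (D1 - p.1) (D2 - p.2)))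
    simp only at hsplit1
    have hz1 : 4 * (mu 0 0 * mu (D1 - 0) (D2 - 0)) = 0 := by
      rw [mu_zero_zero]; ring
    have hz2 : 4 * (mu D1 D2 * mu (D1 - D1) (D2 - D2)) = 0 := by
      rw [sub_self, sub_self, mu_zero_zero]; ring
    rw [hz1, hz2] at hsplit1
    have hfil : ∑ p ∈ (grid D1 D2).filter
        (fun p => p ≠ ((0:ℤ), (0:ℤ)) ∧ p ≠ (D1, D2)),
          4 * (mu p.1 p.2 * mu (D1 - p.1) (D2 - p.2))
        = ∑ p ∈ (grid D1 D2).filter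
        (fun p => p ≠ ((0:ℤ), (0:ℤ)) ∧ p ≠ (D1, D2)),
          ((fz (p.1-0) (p.2-0) + fz (p.1-1) (p.2-0) - fz (p.1-0) (p.2-1)) *
           (fz (D1-p.1) (D2-p.2) + fz ((D1-1)-p.1) (D2-p.2) - fz (D1-p.1) ((D2-1)-p.2))) := by
      apply Finset.sum_congr rfl
      intro p hp
      simp only [Finset.mem_filter, mem_grid, ne_eq, Prod.ext_iff, not_and_or] at hp
      obtain ⟨hg, hne0, hneD⟩ := hp
      have m1 := mu_lemma p.1 p.2 hg.1.1 hg.2.1 (by tauto)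
      have m2 := mu_lemma (D1 - p.1) (D2 - p.2) (by omega) (by omega) (by omega)
      rw [show (D1 - p.1) - 1 = (D1 - 1) - p.1 by ring,
        show (D2 - p.2) - 1 = (D2 - 1) - p.2 by ring] at m2
      simp only [sub_zero]
      linear_combination (2 * mu (D1 - p.1) (D2 - p.2)) * m1
        + (fz p.1 p.2 + fz (p.1 - 1) p.2 - fz p.1 (p.2 - 1)) * m2
    have hsplit2 := split_any (fun p =>
        (fz (p.1-0) (p.2-0) + fz (p.1-1) (p.2-0) - fz (p.1-0) (p.2-1)) *
        (fz (D1-p.1) (D2-p.2) + fz ((D1-1)-p.1) (D2-p.2) - fz (D1-p.1) ((D2-1)-p.2)))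
    simp only at hsplit2
    have hv1 : (fz ((0:ℤ)-0) ((0:ℤ)-0) + fz ((0:ℤ)-1) ((0:ℤ)-0) - fz ((0:ℤ)-0) ((0:ℤ)-1)) *
        (fz (D1-0) (D2-0) + fz ((D1-1)-0) (D2-0) - fz (D1-0) ((D2-1)-0))
        = fz D1 D2 + fz (D1-1) D2 - fz D1 (D2-1) := by
      rw [hV00a]
      simp only [sub_zero]
      ring
    have hv2 : (fz (D1-0) (D2-0) + fz (D1-1) (D2-0) - fz (D1-0) (D2-1)) *
        (fz (D1-D1) (D2-D2) + fz ((D1-1)-D1) (D2-D2) - fz (D1-D1) ((D2-1)-D2))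
        = fz D1 D2 + fz (D1-1) D2 - fz D1 (D2-1) := by
      rw [sub_self, sub_self, show (D1-1)-D1 = (-1:ℤ) by ring,
        show (D2-1)-D2 = (-1:ℤ) by ring]
      rw [fz00, fz_neg_left (show (-1:ℤ) < 0 by norm_num),
        fz_neg_right (show (-1:ℤ) < 0 by norm_num)]
      simp only [sub_zero]
      ring
    rw [hv1, hv2] at hsplit2
    rw [nine] at hsplit2
    -- combine
    have e4X : ∑ p ∈ grid D1 D2, 4 * (mu p.1 p.2 * mu (D1 - p.1) (D2 - p.2))
        = 4 * ∑ p ∈ grid D1 D2, mu p.1 p.2 * mu (D1 - p.1) (D2 - p.2) := by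
      rw [Finset.mul_sum]
    rw [e4X, hfil] at hsplit1
    simp only [sub_zero] at hsplit1 hsplit2 ⊢
    rw [show D1 - 1 - 1 = D1 - 2 by ring, show D2 - 1 - 1 = D2 - 2 by ring] at hsplit2
    linear_combination hsplit1 - hsplit2 + hmaster
  -- endpoint values of E2
  have hend1 : (sfun (0:ℤ) (0:ℤ) - sfun (D1 - 0) (D2 - 0))^2 * fz (0:ℤ) (0:ℤ)
      * fz (D1 - 0) (D2 - 0) = (sfun D1 D2)^2 * fz D1 D2 := by
    rw [sub_zero, sub_zero, sfun_zero_zero, fz00]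
    ring
  have hend2 : (sfun D1 D2 - sfun (D1 - D1) (D2 - D2))^2 * fz D1 D2
      * fz (D1 - D1) (D2 - D2) = (sfun D1 D2)^2 * fz D1 D2 := by
    rw [sub_self, sub_self, sfun_zero_zero, fz00]
    ring
  have hsplitE := split_any (fun p =>
      (sfun p.1 p.2 - sfun (D1 - p.1) (D2 - p.2))^2 * fz p.1 p.2
        * fz (D1 - p.1) (D2 - p.2))
  simp only at hsplitE
  rw [hend1, hend2, hsum_expand] at hsplitE
  simp only [sub_zero] at hsplitE
  -- choose/cast identities
  have sq1 := sq_lemma D1 D2 (by omega) (by omega)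
  have sq2 := sq_lemma2 D1 D2 (by omega) (by omega)
  have hs : sfun D1 D2 = (d₁:ℚ)/((d₁:ℚ)+(d₂:ℚ)) := by
    rw [sfun, hD1, hD2]
    push_cast
    ring
  have hs' : sfun D2 D1 = (d₂:ℚ)/((d₁:ℚ)+(d₂:ℚ)) := by
    rw [sfun, hD1, hD2]
    push_cast
    rw [add_comm ((d₂:ℚ)) ((d₁:ℚ))]
  have hF : fz D1 D2 = (((d₁+d₂).choose d₁ : ℕ):ℚ)^2 := by
    rw [hD1, hD2, fz_coe]
  have hd : ((d₁:ℚ)+(d₂:ℚ)) ≠ 0 := by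
    have h' : (0:ℤ) < (d₁:ℤ) + d₂ := by omega
    have h2 : (0:ℚ) < (d₁:ℚ) + d₂ := by exact_mod_cast h'
    exact ne_of_gt h2
  -- final combination
  rw [← hF]
  have final : ∑ p ∈ (grid D1 D2).filter
      (fun p => p ≠ ((0:ℤ), (0:ℤ)) ∧ p ≠ (D1, D2)),
      (sfun p.1 p.2 - sfun (D1 - p.1) (D2 - p.2))^2 * fz p.1 p.2
        * fz (D1 - p.1) (D2 - p.2)
      = fz D1 D2 + fz (D1-1) D2 - fz D1 (D2-1) - 2 * (sfun D1 D2)^2 * fz D1 D2 := by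
    linear_combination (-1 : ℚ) * hsplitE - (1/2) * hcross
  rw [final, ← sq1, ← sq2]
  rw [hs, hs'] at *
  field_simp
  ring

/-- WDVV-derived binomial identity for local `ℙ¹ × ℙ¹`. -/
theorem stmt_0 (d₁ d₂ : ℕ) (h₁ : 0 < d₁) (h₂ : 0 < d₂) :
    (2 * d₁ * d₂ : ℚ) / ((d₁ + d₂ : ℚ) ^ 2) * ((d₁ + d₂).choose d₁ : ℚ) ^ 2 =
      ∑ p ∈ (Finset.range (d₁ + 1) ×ˢ Finset.range (d₂ + 1)).filter
          (fun p => p ≠ (0, 0) ∧ p ≠ (d₁, d₂)),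
        ((p.1 : ℚ) * ((d₂ - p.2 : ℕ) : ℚ) - (p.2 : ℚ) * ((d₁ - p.1 : ℕ) : ℚ)) ^ 2 /
            (((p.1 + p.2 : ℕ) : ℚ) ^ 2 * (((d₁ - p.1) + (d₂ - p.2) : ℕ) : ℚ) ^ 2) *
          ((p.1 + p.2).choose p.1 : ℚ) ^ 2 *
          (((d₁ - p.1) + (d₂ - p.2)).choose (d₁ - p.1) : ℚ) ^ 2 := by
  rw [step_A d₁ d₂, main_int d₁ d₂ h₁ h₂]
end

section
/- Let $c$ be an integer and let $m \colon \mathbb{Z}_{>0} \times \mathbb{Z}_{>0} \to \mathbb{Z}$ be a symmetric function satisfying: (i) $m(a,b) = m(a-b, b)$ whenever $a > b$, and (ii) $m(r,r) = c\, r - \sum_{r'=1}^{r-1} m(r', r - r')$ for every $r \geq 1$. Then $m(a,b) = c$ for all positive integers $a, b$. -/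
open Finset

/-- Abstract meeting-invariant recursion: a symmetric function satisfying the
subtraction rule and the diagonal recursion is constant. -/
theorem stmt_3 (c : ℤ) (m : ℕ → ℕ → ℤ)
    (hsymm : ∀ a b : ℕ, 0 < a → 0 < b → m a b = m b a)
    (hsub : ∀ a b : ℕ, 0 < b → b < a → m a b = m (a - b) b)
    (hdiag : ∀ r : ℕ, 1 ≤ r →
      m r r = c * r - ∑ r' ∈ Finset.Ico 1 r, m r' (r - r')) :
    ∀ a b : ℕ, 0 < a → 0 < b → m a b = c := by
  have main : ∀ n a b : ℕ, a + b ≤ n → 0 < a → 0 < b → m a b = c := by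
    intro n
    induction n with
    | zero => intro a b h ha hb; omega
    | succ n ih =>
      intro a b h ha hb
      rcases lt_trichotomy a b with hab | hab | hab
      · rw [hsymm a b ha hb, hsub b a ha hab]
        exact ih _ _ (by omega) (by omega) ha
      · subst hab
        rw [hdiag a ha]
        have hterm : ∀ r' ∈ Finset.Ico 1 a, m r' (a - r') = c := by
          intro r' hr'
          simp only [Finset.mem_Ico] at hr'
          exact ih r' (a - r') (by omega) (by omega) (by omega)
        rw [Finset.sum_congr rfl hterm, Finset.sum_const, Nat.card_Ico]
        have h1 : ((a - 1 : ℕ) : ℤ) = (a : ℤ) - 1 := by omega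
        simp [h1]
        ring
      · rw [hsub a b hb hab]
        exact ih _ _ (by omega) (by omega) hb
  intro a b ha hb
  exact main (a + b) a b le_rfl ha hb
end
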